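/- arXiv:1306.3904 — 3 statements merged into one kernel-verified Lean document; each statement's English description precedes it below -/
import Mathlib

section
/- Let P and Q be orthogonal projections on a Hilbert space H with ‖P − Q‖ < 1. Then the Kato–Nagy operator W := (1 − (P − Q)²)^{−1/2} (QP + (1−Q)(1−P)) is unitary and satisfies Q = W P W⁻¹. -/
/-- Generalized binomial coefficient `x choose n` for real `x`. -/
noncomputable def genBinom (x : ℝ) (n : ℕ) : ℝ :=
  (∏ i ∈ Finset.range n, (x - i)) / n.factorial

lemma genBinom_zero (x : ℝ) : genBinom x 0 = 1 := by simp [genBinom]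

lemma genBinom_succ (x : ℝ) (n : ℕ) :
    ((n : ℝ) + 1) * genBinom x (n + 1) = (x - n) * genBinom x n := by
  rw [genBinom, genBinom, Finset.prod_range_succ, Nat.factorial_succ]
  have h1 : ((n.factorial : ℝ)) ≠ 0 := by positivity
  push_cast
  field_simp

lemma genBinom_abs_le (n : ℕ) : |genBinom (-(1/2)) n| ≤ 1 := by
  rw [genBinom, abs_div, Finset.abs_prod]
  rw [abs_of_nonneg (by positivity : (0:ℝ) ≤ (n.factorial : ℝ))]
  rw [div_le_one (by positivity)]
  calc ∏ i ∈ Finset.range n, |(-(1/2) : ℝ) - i|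
      ≤ ∏ i ∈ Finset.range n, ((i : ℝ) + 1) := by
        apply Finset.prod_le_prod (fun i _ => abs_nonneg _)
        intro i _
        have : (0:ℝ) ≤ (i:ℝ) := Nat.cast_nonneg i
        rw [abs_of_nonpos (by linarith)]
        linarith
    _ = (n.factorial : ℝ) := by
        rw [← Finset.prod_range_add_one_eq_factorial]
        push_cast
        rfl

set_option linter.constructorNameAsVariable false in
lemma twice (m : ℕ) :
    2 * ∑ k ∈ Finset.range (m+1), (k:ℝ) * (genBinom (-(1/2)) k * genBinom (-(1/2)) (m-k))
      = m * ∑ k ∈ Finset.range (m+1), genBinom (-(1/2)) k * genBinom (-(1/2)) (m-k) := by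
  have refl := Finset.sum_range_reflect (fun k => (k:ℝ) * (genBinom (-(1/2)) k * genBinom (-(1/2)) (m-k))) (m+1)
  rw [two_mul]
  nth_rewrite 1 [← refl]
  rw [← Finset.sum_add_distrib, Finset.mul_sum]
  apply Finset.sum_congr rfl
  intro j hj
  have hjm : j ≤ m := Nat.lt_succ_iff.mp (Finset.mem_range.mp hj)
  simp only [Nat.add_sub_cancel]
  rw [Nat.sub_sub_self hjm, Nat.cast_sub hjm]
  ring

lemma genBinom_conv : ∀ n : ℕ, ∑ k ∈ Finset.range (n+1), genBinom (-(1/2)) k * genBinom (-(1/2)) (n-k) = (-1)^n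
  | 0 => by simp [genBinom_zero]
  | (n+1) => by
    have ih := genBinom_conv n
    have h2 : ∑ k ∈ Finset.range (n+2), (k:ℝ) * (genBinom (-(1/2)) k * genBinom (-(1/2)) (n+1-k))
        = ∑ i ∈ Finset.range (n+1), (-(1/2) - (i:ℝ)) * (genBinom (-(1/2)) i * genBinom (-(1/2)) (n-i)) := by
      rw [Finset.sum_range_succ']
      simp only [Nat.cast_zero, zero_mul, add_zero]
      apply Finset.sum_congr rfl
      intro i _
      have he : (n+1) - (i+1) = n - i := by omega
      rw [he]
      have hrec := genBinom_succ (-(1/2)) i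
      push_cast
      rw [← mul_assoc, hrec, mul_assoc]
    have h3 : ∑ i ∈ Finset.range (n+1), (-(1/2) - (i:ℝ)) * (genBinom (-(1/2)) i * genBinom (-(1/2)) (n-i))
        = -(1/2) * (-1:ℝ)^n - (1/2) * ((n:ℝ) * (-1)^n) := by
      have expand : ∀ i ∈ Finset.range (n+1),
          (-(1/2) - (i:ℝ)) * (genBinom (-(1/2)) i * genBinom (-(1/2)) (n-i))
            = -(1/2) * (genBinom (-(1/2)) i * genBinom (-(1/2)) (n-i)) - (i:ℝ) * (genBinom (-(1/2)) i * genBinom (-(1/2)) (n-i)) := by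
        intro i _; ring
      rw [Finset.sum_congr rfl expand, Finset.sum_sub_distrib, ← Finset.mul_sum, ih]
      have : ∑ i ∈ Finset.range (n+1), (i:ℝ) * (genBinom (-(1/2)) i * genBinom (-(1/2)) (n-i)) = (n:ℝ) * (-1)^n / 2 := by
        have := twice n
        rw [ih] at this
        linarith
      rw [this]
      ring
    have h4 := twice (n+1)
    rw [h2, h3] at h4
    push_cast at h4
    have hne : ((n:ℝ)+1) ≠ 0 := by positivity
    apply mul_left_cancel₀ hne
    rw [show ((n:ℝ)+1) * (-1)^(n+1) = -(1/2) * (-1:ℝ)^n - (1/2) * ((n:ℝ) * (-1)^n)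
        + (-(1/2) * (-1:ℝ)^n - (1/2) * ((n:ℝ) * (-1)^n)) from by ring]
    linarith [h4]

/-- Kato–Nagy. If `P, Q` are orthogonal projections on a complex Hilbert
space with `‖P - Q‖ < 1`, then the Kato–Nagy operator
`W = (1 - (P - Q)²)^{-1/2} (QP + (1-Q)(1-P))` (inverse square root defined via the
binomial series) is unitary, and `Q = W P W⁻¹` (with `W⁻¹ = W*`). -/
theorem kato_nagy_unitary_intertwiner
    {H : Type*} [NormedAddCommGroup H] [InnerProductSpace ℂ H] [CompleteSpace H]
    (P Q : H →L[ℂ] H)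
    (hP : IsIdempotentElem P) (hPsa : IsSelfAdjoint P)
    (hQ : IsIdempotentElem Q) (hQsa : IsSelfAdjoint Q)
    (hPQ : ‖P - Q‖ < 1)
    (W : H →L[ℂ] H)
    (hW : W = (∑' n : ℕ, (genBinom (-(1/2)) n : ℂ) • (-((P - Q) * (P - Q))) ^ n) *
      (Q * P + (1 - Q) * (1 - P))) :
    W * ContinuousLinearMap.adjoint W = 1 ∧
    ContinuousLinearMap.adjoint W * W = 1 ∧
    Q = W * P * ContinuousLinearMap.adjoint W := by
  set D : H →L[ℂ] H := P - Q with hD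
  set A : H →L[ℂ] H := D * D with hA
  have hAnorm : ‖A‖ < 1 := by
    have h0 : (0:ℝ) ≤ ‖D‖ := norm_nonneg _
    calc ‖A‖ ≤ ‖D‖ * ‖D‖ := norm_mul_le _ _
      _ < 1 := by nlinarith
  -- the series
  set c : ℕ → ℂ := fun n => ((genBinom (-(1/2)) n : ℝ) : ℂ) with hc
  set f : ℕ → (H →L[ℂ] H) := fun n => c n • (-A) ^ n with hf
  have hfnorm : ∀ n, ‖f n‖ ≤ ‖A‖ ^ n := by
    intro n
    have hcn : ‖c n‖ ≤ 1 := by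
      simpa [hc, Complex.norm_real] using genBinom_abs_le n
    cases n with
    | zero =>
      simp only [hf, pow_zero]
      calc ‖c 0 • (1:H →L[ℂ] H)‖ = ‖c 0‖ * ‖(1:H →L[ℂ] H)‖ := norm_smul _ _
        _ ≤ 1 * 1 := by
            exact mul_le_mul hcn ContinuousLinearMap.norm_id_le (norm_nonneg _) zero_le_one
        _ = 1 := one_mul 1
    | succ m =>
      calc ‖f (m+1)‖ = ‖c (m+1)‖ * ‖(-A)^(m+1)‖ := norm_smul _ _
        _ ≤ 1 * ‖-A‖^(m+1) := by
            exact mul_le_mul hcn (norm_pow_le' _ (Nat.succ_pos m)) (norm_nonneg _) zero_le_one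
        _ = ‖A‖^(m+1) := by rw [one_mul, norm_neg]
  have hsumnorm : Summable (fun n => ‖f n‖) :=
    Summable.of_nonneg_of_le (fun n => norm_nonneg _) hfnorm
      (summable_geometric_of_lt_one (norm_nonneg A) hAnorm)
  have hfsum : Summable f := hsumnorm.of_norm
  set S : H →L[ℂ] H := ∑' n, f n with hS
  set G : H →L[ℂ] H := ∑' n : ℕ, A ^ n with hG
  have hGsum : Summable (fun n : ℕ => A ^ n) := summable_geometric_of_norm_lt_one hAnorm
  -- S * S = G
  have hSS : S * S = G := by
    rw [hS, hG, tsum_mul_tsum_eq_tsum_sum_range_of_summable_norm hsumnorm hsumnorm]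
    apply tsum_congr
    intro n
    have step : ∀ k ∈ Finset.range (n+1), f k * f (n-k) = (c k * c (n-k)) • (-A)^n := by
      intro k hk
      have hkn : k ≤ n := Nat.lt_succ_iff.mp (Finset.mem_range.mp hk)
      rw [hf]
      simp only
      rw [smul_mul_smul_comm, ← pow_add, Nat.add_sub_cancel' hkn]
    rw [Finset.sum_congr rfl step, ← Finset.sum_smul]
    have hcsum : ∑ k ∈ Finset.range (n+1), c k * c (n-k) = ((-1:ℂ))^n := by
      rw [hc]
      calc (∑ k ∈ Finset.range (n+1),
            ((genBinom (-(1/2)) k : ℝ):ℂ) * ((genBinom (-(1/2)) (n-k) : ℝ):ℂ))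
          = (((∑ k ∈ Finset.range (n+1),
              genBinom (-(1/2)) k * genBinom (-(1/2)) (n-k) : ℝ)):ℂ) := by push_cast; rfl
        _ = (-1:ℂ)^n := by rw [genBinom_conv]; push_cast; rfl
    rw [hcsum]
    have : (-A)^n = ((-1:ℂ))^n • A^n := by
      rw [show -A = ((-1:ℂ)) • A from by simp, smul_pow]
    rw [this, smul_smul, ← mul_pow]
    norm_num
  have hG1 : G * (1 - A) = 1 := geom_series_mul_neg A hAnorm
  have h1G : (1 - A) * G = 1 := mul_neg_geom_series A hAnorm
  -- commutation of A with P and Q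
  have hP1 : ∀ x : H →L[ℂ] H, P * (P * x) = P * x := fun x => by rw [← mul_assoc, hP.eq]
  have hQ1 : ∀ x : H →L[ℂ] H, Q * (Q * x) = Q * x := fun x => by rw [← mul_assoc, hQ.eq]
  have hAP : A * P = P * A := by
    simp only [hA, hD, sub_mul, mul_sub, mul_assoc, hP.eq, hQ.eq, hP1, hQ1]
    abel
  have hAQ : A * Q = Q * A := by
    simp only [hA, hD, sub_mul, mul_sub, mul_assoc, hP.eq, hQ.eq, hP1, hQ1]
    abel
  -- S and G commute with anything commuting with A
  have commS : ∀ X : H →L[ℂ] H, A * X = X * A → S * X = X * S := by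
    intro X hX
    have hcomm : ∀ n : ℕ, f n * X = X * f n := by
      intro n
      have h1 : Commute (-A) X := (Commute.neg_left hX)
      have h2 : (-A)^n * X = X * (-A)^n := (h1.pow_left n)
      rw [hf]
      simp only
      rw [smul_mul_assoc, h2, mul_smul_comm]
    rw [hS, ← Summable.tsum_mul_right X hfsum]
    rw [show (fun n => f n * X) = (fun n => X * f n) from funext hcomm]
    exact Summable.tsum_mul_left X hfsum
  have commG : ∀ X : H →L[ℂ] H, A * X = X * A → G * X = X * G := by
    intro X hX
    have hcomm : ∀ n : ℕ, A^n * X = X * A^n := fun n => (Commute.pow_left hX n)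
    rw [hG, ← Summable.tsum_mul_right X hGsum]
    rw [show (fun n : ℕ => A^n * X) = (fun n => X * A^n) from funext hcomm]
    exact Summable.tsum_mul_left X hGsum
  -- the partial isometry part
  set U : H →L[ℂ] H := Q * P + (1 - Q) * (1 - P) with hU
  set V : H →L[ℂ] H := P * Q + (1 - P) * (1 - Q) with hV
  have hUV : U * V = 1 - A := by
    simp only [hU, hV, hA, hD, sub_mul, mul_sub, add_mul, mul_add, mul_one, one_mul,
      mul_assoc, hP.eq, hQ.eq, hP1, hQ1]
    abel
  have hVU : V * U = 1 - A := by
    simp only [hU, hV, hA, hD, sub_mul, mul_sub, add_mul, mul_add, mul_one, one_mul,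
      mul_assoc, hP.eq, hQ.eq, hP1, hQ1]
    abel
  have hUP : U * P = Q * U := by
    simp only [hU, sub_mul, mul_sub, add_mul, mul_add, mul_one, one_mul,
      mul_assoc, hP.eq, hQ.eq, hP1, hQ1]
    abel
  -- A commutes with U and V and (1 - A)
  have hAsub : ∀ X : H →L[ℂ] H, A * X = X * A → A * (1 - X) = (1 - X) * A := by
    intro X hX
    rw [mul_sub, sub_mul, mul_one, one_mul, hX]
  have hAmul : ∀ X Y : H →L[ℂ] H, A * X = X * A → A * Y = Y * A → A * (X * Y) = (X * Y) * A := by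
    intro X Y hX hY
    rw [← mul_assoc, hX, mul_assoc, hY, ← mul_assoc]
  have hAU : A * U = U * A := by
    rw [hU, mul_add, add_mul, hAmul Q P hAQ hAP,
      hAmul _ _ (hAsub Q hAQ) (hAsub P hAP)]
  have hAV : A * V = V * A := by
    rw [hV, mul_add, add_mul, hAmul P Q hAP hAQ,
      hAmul _ _ (hAsub P hAP) (hAsub Q hAQ)]
  have hA1A : A * (1 - A) = (1 - A) * A := hAsub A rfl
  -- adjoints
  have hDsa : IsSelfAdjoint D := hPsa.sub hQsa
  have hAsa : IsSelfAdjoint A := by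
    rw [hA, IsSelfAdjoint, star_mul, hDsa.star_eq]
  have hstarS : star S = S := by
    rw [hS, tsum_star]
    apply tsum_congr
    intro n
    rw [hf]
    simp only
    rw [star_smul, star_pow, star_neg, hAsa.star_eq]
    congr 1
    simp [hc]
  have hstarU : star U = V := by
    rw [hU, hV, star_add, star_mul, star_mul, star_sub, star_sub, star_one,
      hPsa.star_eq, hQsa.star_eq]
  have hadjW : ContinuousLinearMap.adjoint (S * U) = V * S := by
    rw [← ContinuousLinearMap.star_eq_adjoint, star_mul, hstarU, hstarS]
  have hWSU : W = S * U := by rw [hW]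
  -- main computations
  have hS1AS : S * ((1 - A) * S) = 1 := by
    rw [show (1 - A) * S = S * (1 - A) from (commS _ hA1A).symm, ← mul_assoc, hSS, hG1]
  constructor
  · rw [hWSU, hadjW, mul_assoc, ← mul_assoc U V, hUV, hS1AS]
  constructor
  · rw [hWSU, hadjW, mul_assoc, ← mul_assoc S S U, hSS]
    rw [show G * U = U * G from commG U hAU, ← mul_assoc, hVU, h1G]
  · rw [hWSU, hadjW]
    rw [show S * U * P = S * (Q * U) from by rw [mul_assoc, hUP]]
    rw [show S * (Q * U) = Q * (S * U) from by
      rw [← mul_assoc, commS Q hAQ, mul_assoc]]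
    rw [mul_assoc, mul_assoc, ← mul_assoc U V S, hUV, hS1AS, mul_one]
end

section
/- Let P, Q : M → B(H) be C² families of orthogonal projections on a manifold M, with ‖P(x) − Q(x)‖ < 1 for all x, and let W(x) be the Kato–Nagy unitary intertwining them. Define the curvature-type 2-forms ω_{jℓ}^P = tr(P [∂_j P, ∂_ℓ P]) and ω_{jℓ}^Q = tr(Q [∂_j Q, ∂_ℓ Q]). Then ω_{jℓ}^Q − ω_{jℓ}^P = ∂_j tr(P W^{−1} ∂_ℓ W) − ∂_ℓ tr(P W^{−1} ∂_j W); in particular ω^Q − ω^P is an exact 2-form. -/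
open ContinuousLinearMap

/-- Generalized binomial coefficient `x choose n` for real `x`. -/
noncomputable def genBinom' (x : ℝ) (n : ℕ) : ℝ :=
  (∏ i ∈ Finset.range n, (x - i)) / n.factorial

lemma smeval_descPochhammer_real (x : ℝ) (n : ℕ) :
    (descPochhammer ℤ n).smeval x = ∏ i ∈ Finset.range n, (x - i) := by
  induction n with
  | zero => simp [descPochhammer_zero, Polynomial.smeval_one]
  | succ n ih =>
      rw [descPochhammer_succ_right, Polynomial.smeval_mul, ih, Finset.prod_range_succ]
      congr 1
      rw [Polynomial.smeval_sub, Polynomial.smeval_X, Polynomial.smeval_natCast]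
      simp

lemma genBinom'_eq_choose (x : ℝ) (n : ℕ) : genBinom' x n = Ring.choose x n := by
  have h := Ring.descPochhammer_eq_factorial_smul_choose x n
  rw [smeval_descPochhammer_real] at h
  rw [genBinom', h, nsmul_eq_mul]
  field_simp

lemma choose_neg_one (n : ℕ) : Ring.choose (-1 : ℝ) n = (-1) ^ n := by
  rw [← genBinom'_eq_choose, genBinom']
  have : ∏ i ∈ Finset.range n, ((-1 : ℝ) - i) = (-1)^n * n.factorial := by
    induction n with
    | zero => simp
    | succ n ih =>
        rw [Finset.prod_range_succ, ih, Nat.factorial_succ, pow_succ]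
        push_cast
        ring
  rw [this]
  field_simp [Nat.factorial_ne_zero]

lemma genBinom'_conv (n : ℕ) :
    ∑ ij ∈ Finset.HasAntidiagonal.antidiagonal n, genBinom' (-(1/2)) ij.1 * genBinom' (-(1/2)) ij.2
      = (-1 : ℝ) ^ n := by
  have h := Ring.add_choose_eq (R := ℝ) (r := -(1/2)) (s := -(1/2)) n (Commute.all _ _)
  have h2 : (-(1/2) : ℝ) + -(1/2) = -1 := by norm_num
  rw [h2, choose_neg_one] at h
  rw [h]
  refine Finset.sum_congr rfl fun ij _ => ?_
  rw [genBinom'_eq_choose, genBinom'_eq_choose]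

lemma genBinom'_abs_le (n : ℕ) : |genBinom' (-(1/2)) n| ≤ 1 := by
  rw [genBinom', abs_div, Nat.abs_cast]
  rw [div_le_one (by positivity)]
  calc |∏ i ∈ Finset.range n, ((-(1/2) : ℝ) - i)|
      = ∏ i ∈ Finset.range n, |(-(1/2) : ℝ) - i| := by rw [Finset.abs_prod]
    _ ≤ ∏ i ∈ Finset.range n, ((i : ℝ) + 1) := by
        refine Finset.prod_le_prod (fun i _ => abs_nonneg _) fun i _ => ?_
        have hi : (0:ℝ) ≤ (i:ℝ) := Nat.cast_nonneg i
        rw [abs_of_nonpos (by nlinarith)]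
        nlinarith
    _ = n.factorial := by
        norm_cast
        exact Finset.prod_range_add_one_eq_factorial n

section KeyAlg

variable {A : Type*} [Ring A] {S : Type*} [AddCommGroup S]

lemma key_alg (τ : A →+ S) (cyc : ∀ a b : A, τ (a * b) = τ (b * a))
    (p pj pl aj al : A) (hp : p * p = p)
    (hpj : pj = p * pj + pj * p) (hpl : pl = p * pl + pl * p) :
    τ (p * ((pj + (aj * p - p * aj)) * (pl + (al * p - p * al))
          - (pl + (al * p - p * al)) * (pj + (aj * p - p * aj))))
      - τ (p * (pj * pl - pl * pj))
    = (τ (pj * al) - τ (pl * aj)) + τ (p * (al * aj - aj * al)) := by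
  -- absorption: τ (p * u * p) = τ (p * u)
  have habs : ∀ u : A, τ (p * u * p) = τ (p * u) := fun u => by
    rw [cyc (p * u) p, ← mul_assoc, hp]
  -- p * pj * p = 0
  have hzd : ∀ x : A, x = p * x + x * p → p * x * p = 0 := by
    intro x hx
    have h1 : p * x * p = p * x * p + p * x * p := by
      calc p * x * p = p * (p * x + x * p) * p := by rw [← hx]
        _ = p * p * x * p + p * x * (p * p) := by noncomm_ring
        _ = p * x * p + p * x * p := by rw [hp]
    exact (left_eq_add.mp h1)
  have hpjp : p * pj * p = 0 := hzd pj hpj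
  have hplp : p * pl * p = 0 := hzd pl hpl
  -- τ (p * a * (p * x)) = 0  whenever x = p x + x p
  have tzero : ∀ a x : A, x = p * x + x * p → τ (p * a * (p * x)) = 0 := by
    intro a x hx
    have h1 : τ (p * a * (p * x)) = τ (p * a * (p * x)) + τ (p * a * (p * x)) := by
      calc τ (p * a * (p * x)) = τ (p * a * (p * (p * x + x * p))) := by rw [← hx]
        _ = τ (p * a * ((p * p) * x) + p * a * (p * x) * p) := by
            rw [show p * a * (p * (p * x + x * p)) = p * a * ((p * p) * x) + p * a * (p * x) * p
              from by noncomm_ring]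
        _ = τ (p * a * (p * x)) + τ (p * a * (p * x) * p) := by rw [hp, map_add]
        _ = τ (p * a * (p * x)) + τ (p * a * (p * x)) := by
            rw [show p * a * (p * x) * p = p * (a * (p * x)) * p from by noncomm_ring,
              habs (a * (p * x)),
              show p * (a * (p * x)) = p * a * (p * x) from (mul_assoc p a (p * x)).symm]
    exact left_eq_add.mp h1
  -- split LHS
  have hsplit : p * ((pj + (aj * p - p * aj)) * (pl + (al * p - p * al))
          - (pl + (al * p - p * al)) * (pj + (aj * p - p * aj))) - p * (pj * pl - pl * pj)
      = (p * (pj * (al * p - p * al) - (al * p - p * al) * pj))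
        + (p * ((aj * p - p * aj) * pl - pl * (aj * p - p * aj)))
        + (p * ((aj * p - p * aj) * (al * p - p * al)
              - (al * p - p * al) * (aj * p - p * aj))) := by noncomm_ring
  have hLHS : τ (p * ((pj + (aj * p - p * aj)) * (pl + (al * p - p * al))
          - (pl + (al * p - p * al)) * (pj + (aj * p - p * aj))))
      - τ (p * (pj * pl - pl * pj))
      = τ (p * (pj * (al * p - p * al) - (al * p - p * al) * pj))
        + τ (p * ((aj * p - p * aj) * pl - pl * (aj * p - p * aj)))
        + τ (p * ((aj * p - p * aj) * (al * p - p * al)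
              - (al * p - p * al) * (aj * p - p * aj))) := by
    rw [← map_sub, hsplit, map_add, map_add]
  rw [hLHS]
  -- Term A
  have hA : τ (p * (pj * (al * p - p * al) - (al * p - p * al) * pj)) = τ (pj * al) := by
    have e1 : p * (pj * (al * p - p * al) - (al * p - p * al) * pj)
        = p * (pj * al) * p - (p * pj * p) * al - p * al * (p * pj) + (p * p) * (al * pj) := by
      noncomm_ring
    rw [e1, map_add, map_sub, map_sub, habs (pj * al), hpjp, hp, zero_mul, map_zero,
      tzero al pj hpj]
    have e2 : τ (pj * al) = τ (p * (pj * al)) + τ (p * (al * pj)) := by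
      calc τ (pj * al) = τ ((p * pj + pj * p) * al) := by rw [← hpj]
        _ = τ (p * (pj * al) + pj * (p * al)) := by
            rw [show (p * pj + pj * p) * al = p * (pj * al) + pj * (p * al) from by noncomm_ring]
        _ = τ (p * (pj * al)) + τ (pj * (p * al)) := by rw [map_add]
        _ = τ (p * (pj * al)) + τ (p * (al * pj)) := by
            rw [cyc pj (p * al), show p * al * pj = p * (al * pj) from by noncomm_ring]
    rw [e2]; abel
  -- Term B
  have hB : τ (p * ((aj * p - p * aj) * pl - pl * (aj * p - p * aj))) = - τ (pl * aj) := by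
    have e1 : p * ((aj * p - p * aj) * pl - pl * (aj * p - p * aj))
        = p * aj * (p * pl) - (p * p) * (aj * pl) - p * (pl * aj) * p + (p * pl * p) * aj := by
      noncomm_ring
    rw [e1, map_add, map_sub, map_sub, habs (pl * aj), hplp, hp, zero_mul, map_zero,
      tzero aj pl hpl]
    have e2 : τ (pl * aj) = τ (p * (pl * aj)) + τ (p * (aj * pl)) := by
      calc τ (pl * aj) = τ ((p * pl + pl * p) * aj) := by rw [← hpl]
        _ = τ (p * (pl * aj) + pl * (p * aj)) := by
            rw [show (p * pl + pl * p) * aj = p * (pl * aj) + pl * (p * aj) from by noncomm_ring]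
        _ = τ (p * (pl * aj)) + τ (pl * (p * aj)) := by rw [map_add]
        _ = τ (p * (pl * aj)) + τ (p * (aj * pl)) := by
            rw [cyc pl (p * aj), show p * aj * pl = p * (aj * pl) from by noncomm_ring]
    rw [e2]; abel
  -- bracket lemma
  have hbr : ∀ a b : A, τ (p * ((a * p - p * a) * (b * p - p * b)))
      = τ (p * (a * (p * b))) - τ (p * (a * b)) := by
    intro a b
    have e : p * ((a * p - p * a) * (b * p - p * b)) =
        (p * (a * (p * b)) * p) - (p * a * ((p * p) * b)) - ((p * p) * (a * (b * p)))
          + ((p * p) * (a * (p * b))) := by noncomm_ring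
    rw [e, hp, map_add, map_sub, map_sub, habs (a * (p * b))]
    have r : τ (p * (a * (b * p))) = τ (p * (a * b)) := by
      rw [show p * (a * (b * p)) = p * (a * b) * p from by noncomm_ring, habs]
    have r' : τ (p * a * (p * b)) = τ (p * (a * (p * b))) := by
      rw [mul_assoc p a (p * b)]
    rw [r, r']
    abel
  have r3 : τ (p * (aj * (p * al))) = τ (p * (al * (p * aj))) := by
    rw [show p * (aj * (p * al)) = (p * aj) * (p * al) from by noncomm_ring,
      cyc (p * aj) (p * al),
      show (p * al) * (p * aj) = p * (al * (p * aj)) from by noncomm_ring]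
  have hC : τ (p * ((aj * p - p * aj) * (al * p - p * al)
        - (al * p - p * al) * (aj * p - p * aj)))
      = τ (p * (al * aj)) - τ (p * (aj * al)) := by
    rw [show p * ((aj * p - p * aj) * (al * p - p * al)
          - (al * p - p * al) * (aj * p - p * aj))
        = p * ((aj * p - p * aj) * (al * p - p * al))
          - p * ((al * p - p * al) * (aj * p - p * aj)) from by noncomm_ring,
      map_sub, hbr aj al, hbr al aj, r3]
    abel
  rw [hA, hB, hC, mul_sub, map_sub]
  abel

end KeyAlg

section Analytic

variable {B : Type*} [NormedRing B] [NormedAlgebra ℂ B] [CompleteSpace B]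

noncomputable def gS (T : B) : B :=
  ∑' n : ℕ, ((genBinom' (-(1/2)) n : ℝ) : ℂ) • T ^ n

noncomputable def psK (B : Type*) [NormedRing B] [NormedAlgebra ℂ B] :
    FormalMultilinearSeries ℂ B B :=
  FormalMultilinearSeries.ofScalars B (fun n => ((genBinom' (-(1/2)) n : ℝ) : ℂ))

lemma psK_radius : 1 ≤ (psK B).radius := by
  apply FormalMultilinearSeries.le_radius_of_bound _ (max 1 ‖psK B 0‖) (r := 1)
  intro n
  rw [NNReal.coe_one, one_pow, mul_one]
  cases n with
  | zero => exact le_max_right _ _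
  | succ n =>
      refine le_trans (FormalMultilinearSeries.ofScalars_norm_le B
        (fun k => ((genBinom' (-(1/2)) k : ℝ) : ℂ)) (n+1) (Nat.succ_pos n)) ?_
      refine le_trans ?_ (le_max_left _ _)
      rw [Complex.norm_real]
      exact genBinom'_abs_le (n+1)

lemma gS_eq_sum : (gS : B → B) = (psK B).sum := by
  funext T
  rw [gS, FormalMultilinearSeries.sum]
  refine tsum_congr fun n => ?_
  rw [psK]
  exact (FormalMultilinearSeries.ofScalars_apply_eq (fun k : ℕ => ((genBinom' (-(1/2)) k : ℝ) : ℂ)) T n).symm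

lemma psK_mem_ball {T : B} (h : ‖T‖ < 1) : T ∈ Metric.eball (0 : B) (psK B).radius := by
  rw [mem_emetric_ball_zero_iff]
  refine lt_of_lt_of_le ?_ psK_radius
  rw [enorm_eq_nnnorm]
  exact_mod_cast h

lemma gS_hasSum {T : B} (h : ‖T‖ < 1) :
    HasSum (fun n : ℕ => ((genBinom' (-(1/2)) n : ℝ) : ℂ) • T ^ n) (gS T) := by
  have hball := (psK B).hasFPowerSeriesOnBall
    (lt_of_lt_of_le zero_lt_one psK_radius)
  have h1 := hball.hasSum (psK_mem_ball h)
  rw [zero_add] at h1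
  rw [gS_eq_sum]
  have h2 : (fun n : ℕ => ((genBinom' (-(1/2)) n : ℝ) : ℂ) • T ^ n)
      = fun n => (psK B) n (fun _ => T) := by
    funext n
    rw [psK]
    exact (FormalMultilinearSeries.ofScalars_apply_eq (fun k : ℕ => ((genBinom' (-(1/2)) k : ℝ) : ℂ)) T n).symm
  rw [h2]
  exact h1

lemma gS_contDiffAt {T : B} (h : ‖T‖ < 1) : ContDiffAt ℝ 2 (gS : B → B) T := by
  have hball := (psK B).hasFPowerSeriesOnBall
    (lt_of_lt_of_le zero_lt_one psK_radius)
  have h1 : AnalyticAt ℂ (psK B).sum T := hball.analyticAt_of_mem (psK_mem_ball h)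
  rw [← gS_eq_sum] at h1
  exact h1.restrictScalars.contDiffAt

end Analytic


section KatoNagy

variable {A : Type*} [NormedRing A] [NormedAlgebra ℂ A] [CompleteSpace A]

lemma katoNagy_alg (p q s : A) (hp : p * p = p) (hq : q * q = q) (hn : ‖p - q‖ < 1)
    (hsum : HasSum (fun n : ℕ =>
      ((genBinom' (-(1/2)) n : ℝ) : ℂ) • (-((p - q) * (p - q))) ^ n) s) :
    ((p*q + (1-p)*(1-q)) * s) * (s * (q*p + (1-q)*(1-p))) = 1
    ∧ (s * (q*p + (1-q)*(1-p))) * ((p*q + (1-p)*(1-q)) * s) = 1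
    ∧ q * (s * (q*p + (1-q)*(1-p))) = (s * (q*p + (1-q)*(1-p))) * p := by
  set d : A := p - q with hd
  set T : A := -(d * d) with hT
  set c : ℕ → ℂ := fun n => ((genBinom' (-(1/2)) n : ℝ) : ℂ) with hc
  set v : A := q*p + (1-q)*(1-p) with hv
  set v' : A := p*q + (1-p)*(1-q) with hv'
  have hdd : d * d = p + q - p*q - q*p := by
    rw [hd]
    have e : (p - q) * (p - q) = p*p + q*q - p*q - q*p := by noncomm_ring
    rw [e, hp, hq]
  have hTn : ‖d * d‖ < 1 := by
    have h1 : ‖d * d‖ ≤ ‖d‖ * ‖d‖ := norm_mul_le d d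
    have h2 : (0:ℝ) ≤ ‖d‖ := norm_nonneg d
    nlinarith
  -- commutation of d*d with p and q
  have hddp : Commute (d * d) p := by
    rw [Commute, SemiconjBy, hdd]
    have e1 : (p + q - p*q - q*p) * p = p*p + q*p - p*(q*p) - q*(p*p) := by noncomm_ring
    have e2 : p * (p + q - p*q - q*p) = p*p + p*q - p*(p*q) - p*(q*p) := by noncomm_ring
    rw [e1, e2, hp, show p*(p*q) = (p*p)*q from by noncomm_ring, hp]
    abel
  have hddq : Commute (d * d) q := by
    rw [Commute, SemiconjBy, hdd]
    have e1 : (p + q - p*q - q*p) * q = p*q + q*q - p*(q*q) - q*(p*q) := by noncomm_ring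
    have e2 : q * (p + q - p*q - q*p) = q*p + q*q - q*(p*q) - q*(q*p) := by noncomm_ring
    rw [e1, e2, hq, show q*(q*p) = (q*q)*p from by noncomm_ring, hq]
    abel
  have hTp : Commute p T := ((hddp.symm).neg_right)
  have hTq : Commute q T := ((hddq.symm).neg_right)
  -- norm summability
  have hgeo : Summable (fun n : ℕ => ‖d*d‖ ^ (n+1)) := by
    have := (summable_geometric_of_lt_one (norm_nonneg (d*d)) hTn).mul_right ‖d*d‖
    refine this.congr fun n => ?_
    rw [← pow_succ]
  have hbound : ∀ n : ℕ, ‖c (n+1) • T ^ (n+1)‖ ≤ ‖d*d‖ ^ (n+1) := by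
    intro n
    rw [norm_smul]
    have h1 : ‖c (n+1)‖ ≤ 1 := by
      rw [hc]
      simp only [Complex.norm_real]
      exact genBinom'_abs_le (n+1)
    have h2 : ‖T ^ (n+1)‖ ≤ ‖d*d‖ ^ (n+1) := by
      have := norm_pow_le' T (Nat.succ_pos n)
      rwa [hT, norm_neg] at this
    calc ‖c (n+1)‖ * ‖T ^ (n+1)‖ ≤ 1 * (‖d*d‖ ^ (n+1)) :=
          mul_le_mul h1 h2 (norm_nonneg _) zero_le_one
      _ = ‖d*d‖ ^ (n+1) := one_mul _
  have hns : Summable (fun n : ℕ => ‖c n • T ^ n‖) := by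
    refine (summable_nat_add_iff 1).mp ?_
    exact Summable.of_nonneg_of_le (fun n => norm_nonneg _) hbound hgeo
  have hs_eq : s = ∑' n : ℕ, c n • T ^ n := hsum.tsum_eq.symm
  have hsummable : Summable (fun n : ℕ => c n • T ^ n) := hsum.summable
  -- commutation with s
  have hcs : ∀ x : A, Commute x T → Commute x s := by
    intro x hx
    rw [Commute, SemiconjBy, hs_eq, ← Summable.tsum_mul_left x hsummable,
      ← Summable.tsum_mul_right x hsummable]
    refine tsum_congr fun n => ?_
    rw [mul_smul_comm, smul_mul_assoc, (hx.pow_right n).eq]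
  have hps : Commute p s := hcs p hTp
  have hqs : Commute q s := hcs q hTq
  have hvs : Commute v s := by
    rw [hv]
    exact (hqs.mul_left hps).add_left
      (((Commute.one_left s).sub_left hqs).mul_left ((Commute.one_left s).sub_left hps))
  have hv's : Commute v' s := by
    rw [hv']
    exact (hps.mul_left hqs).add_left
      (((Commute.one_left s).sub_left hps).mul_left ((Commute.one_left s).sub_left hqs))
  have hdds : Commute (d*d) s := hcs (d*d) (Commute.neg_right (Commute.refl (d*d)))
  -- Cauchy product: s * s = ∑' (d*d)^n
  have hss : s * s = ∑' n : ℕ, (d*d) ^ n := by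
    rw [hs_eq, tsum_mul_tsum_eq_tsum_sum_antidiagonal_of_summable_norm hns hns]
    refine tsum_congr fun n => ?_
    have e : ∀ ij ∈ Finset.HasAntidiagonal.antidiagonal n,
        (c ij.1 • T ^ ij.1) * (c ij.2 • T ^ ij.2) = (c ij.1 * c ij.2) • T ^ n := by
      intro ij hij
      rw [smul_mul_smul_comm, ← pow_add, (Finset.HasAntidiagonal.mem_antidiagonal.mp hij)]
    rw [Finset.sum_congr rfl e, ← Finset.sum_smul]
    have hcoef : (∑ ij ∈ Finset.HasAntidiagonal.antidiagonal n, c ij.1 * c ij.2) = ((-1 : ℂ)) ^ n := by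
      rw [hc]
      simp only []
      exact_mod_cast genBinom'_conv n
    rw [hcoef, show ((-1 : ℂ))^n • T^n = ((-1 : ℂ) • T)^n from (smul_pow _ _ _).symm,
      neg_one_smul, hT, neg_neg]
  have geo1 : (s*s) * (1 - d*d) = 1 := by rw [hss]; exact geom_series_mul_neg _ hTn
  have geo2 : (1 - d*d) * (s*s) = 1 := by rw [hss]; exact mul_neg_geom_series _ hTn
  have key : ∀ a b : A, a*a = a → b*b = b →
      (a*b + (1-a)*(1-b)) * (b*a + (1-b)*(1-a)) = 1 - (a-b)*(a-b) := by
    intro a b ha hb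
    have h0 : b*(1-b) = 0 := by rw [mul_sub, mul_one, hb, sub_self]
    have h0' : (1-b)*b = 0 := by rw [sub_mul, one_mul, hb, sub_self]
    have e : (a*b + (1-a)*(1-b)) * (b*a + (1-b)*(1-a))
        = a*(b*b)*a + a*((b*(1-b))*(1-a)) + (1-a)*(((1-b)*b)*a)
          + (1-a)*((1-b)*((1-b)*(1-a))) := by noncomm_ring
    rw [e, hb, h0, h0']
    have h1 : (1-b)*(1-b) = 1-b := by
      have e' : (1-b)*(1-b) = 1 - b - b + b*b := by noncomm_ring
      rw [e', hb]; abel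
    rw [show (1-b)*((1-b)*(1-a)) = ((1-b)*(1-b))*(1-a) from by noncomm_ring, h1]
    simp only [zero_mul, mul_zero, add_zero, zero_add]
    have e3 : (1-a)*((1-b)*(1-a)) = 1 - a - b + b*a - a + a*a + a*b - a*(b*a) := by
      noncomm_ring
    have e4 : (1 : A) - (a-b)*(a-b) = 1 - a*a - b*b + a*b + b*a := by noncomm_ring
    rw [e3, e4, ha, hb, mul_assoc a b a]
    abel
  have hv'v : v' * v = 1 - d*d := by rw [hv', hv, hd]; exact key p q hp hq
  have hvv' : v * v' = 1 - d*d := by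
    rw [hv, hv', hd]
    have h := key q p hq hp
    rw [show (q-p)*(q-p) = (p-q)*(p-q) from by noncomm_ring] at h
    exact h
  have hqv : q * v = v * p := by
    rw [hv]
    have h0 : q*(1-q) = 0 := by rw [mul_sub, mul_one, hq, sub_self]
    have h0' : (1-p)*p = 0 := by rw [sub_mul, one_mul, hp, sub_self]
    have e1 : q * (q*p + (1-q)*(1-p)) = (q*q)*p + (q*(1-q))*(1-p) := by noncomm_ring
    have e2 : (q*p + (1-q)*(1-p)) * p = q*(p*p) + (1-q)*((1-p)*p) := by noncomm_ring
    rw [e1, e2, hq, hp, h0, h0']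
    simp
  refine ⟨?_, ?_, ?_⟩
  · rw [show (v' * s) * (s * v) = v' * ((s*s) * v) from by noncomm_ring,
      show (s*s)*v = v*(s*s) from (hvs.mul_right hvs).eq.symm,
      show v' * (v * (s*s)) = (v'*v)*(s*s) from by noncomm_ring, hv'v]
    exact geo2
  · rw [show (s * v) * (v' * s) = s * ((v * v') * s) from by noncomm_ring, hvv',
      show s * ((1 - d*d) * s) = (s * (1-d*d)) * s from by noncomm_ring,
      show s * (1-d*d) = (1-d*d) * s from ((Commute.one_left s).sub_left hdds).eq.symm,
      mul_assoc]
    exact geo2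
  · rw [show q * (s * v) = (q * s) * v from by noncomm_ring, hqs.eq,
      show (s * q) * v = s * (q * v) from by noncomm_ring, hqv, ← mul_assoc]

end KatoNagy

lemma fderiv_mul_dir {E' A' : Type*} [NormedAddCommGroup E'] [NormedSpace ℝ E']
    [NormedRing A'] [NormedAlgebra ℝ A'] {F G : E' → A'} {x : E'}
    (hF : DifferentiableAt ℝ F x) (hG : DifferentiableAt ℝ G x) (v : E') :
    fderiv ℝ (fun y => F y * G y) x v = fderiv ℝ F x v * G x + F x * fderiv ℝ G x v := by
  change fderiv ℝ (F * G) x v = _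
  rw [(hF.hasFDerivAt.mul' hG.hasFDerivAt).fderiv]
  simp only [ContinuousLinearMap.add_apply, ContinuousLinearMap.smul_apply,
    ContinuousLinearMap.smulRight_apply, smul_eq_mul]
  exact add_comm _ _

set_option maxHeartbeats 1000000 in
theorem aux_main {A : Type*} [NormedRing A] [NormedAlgebra ℂ A] [CompleteSpace A]
    (M : Set (Fin 3 → ℝ)) (hM : IsOpen M)
    (P Q W : (Fin 3 → ℝ) → A)
    (hPsm : ContDiffOn ℝ 2 P M) (hQsm : ContDiffOn ℝ 2 Q M)
    (hPid : ∀ x ∈ M, P x * P x = P x) (hQid : ∀ x ∈ M, Q x * Q x = Q x)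
    (hclose : ∀ x ∈ M, ‖P x - Q x‖ < 1)
    (hW : ∀ x, W x = gS (-((P x - Q x) * (P x - Q x))) *
      (Q x * P x + (1 - Q x) * (1 - P x)))
    (tr : A → ℂ) (trL : A →L[ℝ] ℂ) (htrL : ∀ T, tr T = trL T)
    (cyc : ∀ a b : A, tr (a * b) = tr (b * a)) :
    ∀ x ∈ M, ∀ j ℓ : Fin 3,
      tr (Q x * (fderiv ℝ Q x (Pi.single j 1) * fderiv ℝ Q x (Pi.single ℓ 1)
            - fderiv ℝ Q x (Pi.single ℓ 1) * fderiv ℝ Q x (Pi.single j 1))) -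
        tr (P x * (fderiv ℝ P x (Pi.single j 1) * fderiv ℝ P x (Pi.single ℓ 1)
            - fderiv ℝ P x (Pi.single ℓ 1) * fderiv ℝ P x (Pi.single j 1))) =
      fderiv ℝ (fun y => tr (P y * Ring.inverse (W y) * fderiv ℝ W y (Pi.single ℓ 1)))
          x (Pi.single j 1) -
        fderiv ℝ (fun y => tr (P y * Ring.inverse (W y) * fderiv ℝ W y (Pi.single j 1)))
          x (Pi.single ℓ 1) := by
  intro x hx j ℓ
  set Sf : (Fin 3 → ℝ) → A := fun y => gS (-((P y - Q y) * (P y - Q y))) with hSf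
  set Vf : (Fin 3 → ℝ) → A := fun y => Q y * P y + (1 - Q y) * (1 - P y) with hVf
  set Vg : (Fin 3 → ℝ) → A := fun y => P y * Q y + (1 - P y) * (1 - Q y) with hVg
  set Wf : (Fin 3 → ℝ) → A := fun y => Sf y * Vf y with hWff
  set Wi : (Fin 3 → ℝ) → A := fun y => Vg y * Sf y with hWii
  have hWfun : W = Wf := funext fun y => hW y
  -- norms
  have hnorm : ∀ y ∈ M, ‖-((P y - Q y) * (P y - Q y))‖ < 1 := by
    intro y hy
    rw [norm_neg]
    have h1 := norm_mul_le (P y - Q y) (P y - Q y)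
    have h2 := hclose y hy
    have h3 := norm_nonneg (P y - Q y)
    nlinarith
  -- smoothness
  have hPc : ∀ y ∈ M, ContDiffAt ℝ 2 P y := fun y hy => hPsm.contDiffAt (hM.mem_nhds hy)
  have hQc : ∀ y ∈ M, ContDiffAt ℝ 2 Q y := fun y hy => hQsm.contDiffAt (hM.mem_nhds hy)
  have hSc : ∀ y ∈ M, ContDiffAt ℝ 2 Sf y := by
    intro y hy
    exact (gS_contDiffAt (hnorm y hy)).comp y
      ((((hPc y hy).sub (hQc y hy)).mul ((hPc y hy).sub (hQc y hy))).neg)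
  have hVc : ∀ y ∈ M, ContDiffAt ℝ 2 Vf y := fun y hy =>
    ((hQc y hy).mul (hPc y hy)).add
      ((contDiffAt_const.sub (hQc y hy)).mul (contDiffAt_const.sub (hPc y hy)))
  have hVgc : ∀ y ∈ M, ContDiffAt ℝ 2 Vg y := fun y hy =>
    ((hPc y hy).mul (hQc y hy)).add
      ((contDiffAt_const.sub (hPc y hy)).mul (contDiffAt_const.sub (hQc y hy)))
  have hWc : ∀ y ∈ M, ContDiffAt ℝ 2 Wf y := fun y hy => (hSc y hy).mul (hVc y hy)
  have hWic : ∀ y ∈ M, ContDiffAt ℝ 2 Wi y := fun y hy => (hVgc y hy).mul (hSc y hy)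
  -- algebra
  have halg : ∀ y ∈ M, Wi y * Wf y = 1 ∧ Wf y * Wi y = 1 ∧ Q y * Wf y = Wf y * P y := by
    intro y hy
    exact katoNagy_alg (P y) (Q y) (Sf y) (hPid y hy) (hQid y hy) (hclose y hy)
      (gS_hasSum (hnorm y hy))
  have hinv : ∀ y ∈ M, Ring.inverse (Wf y) = Wi y := by
    intro y hy
    obtain ⟨h1, h2, -⟩ := halg y hy
    exact Ring.inverse_unit ⟨Wf y, Wi y, h2, h1⟩
  -- shorthand
  set ej : Fin 3 → ℝ := Pi.single j 1 with hej
  set el : Fin 3 → ℝ := Pi.single ℓ 1 with hel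
  rw [hWfun]
  obtain ⟨hu1, hu2, hqw⟩ := halg x hx
  have dP : DifferentiableAt ℝ P x := (hPc x hx).differentiableAt two_ne_zero
  have dWf : DifferentiableAt ℝ Wf x := (hWc x hx).differentiableAt two_ne_zero
  have dWi : DifferentiableAt ℝ Wi x := (hWic x hx).differentiableAt two_ne_zero
  -- projection derivative relation
  have hPP : (fun y => P y * P y) =ᶠ[nhds x] P := by
    filter_upwards [hM.mem_nhds hx] with y hy using (hPid y hy)
  have hrel : ∀ v : Fin 3 → ℝ, fderiv ℝ P x v = P x * fderiv ℝ P x v + fderiv ℝ P x v * P x := by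
    intro v
    have h : fderiv ℝ (fun y => P y * P y) x = fderiv ℝ P x := hPP.fderiv_eq
    have h2 := congrArg (fun (L : (Fin 3 → ℝ) →L[ℝ] A) => L v) h
    rw [fderiv_mul_dir dP dP v] at h2
    nth_rewrite 1 [← h2]
    abel
  -- Wi derivative
  have hWiWf : (fun y => Wi y * Wf y) =ᶠ[nhds x] (fun _ => (1:A)) := by
    filter_upwards [hM.mem_nhds hx] with y hy using (halg y hy).1
  have hwd : ∀ v : Fin 3 → ℝ, fderiv ℝ Wi x v = -((Wi x) * fderiv ℝ Wf x v * (Wi x)) := by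
    intro v
    have h0 : fderiv ℝ (fun y => Wi y * Wf y) x v = 0 := by
      rw [hWiWf.fderiv_eq, fderiv_const_apply]
      rfl
    rw [fderiv_mul_dir dWi dWf v] at h0
    calc fderiv ℝ Wi x v = (fderiv ℝ Wi x v * Wf x) * Wi x := by
          rw [mul_assoc _ (Wf x) (Wi x), hu2, mul_one]
      _ = (-((Wi x) * fderiv ℝ Wf x v)) * (Wi x) := by rw [eq_neg_of_add_eq_zero_left h0]
      _ = -((Wi x) * fderiv ℝ Wf x v * (Wi x)) := neg_mul _ _
  -- Q as conjugate
  have hQf : Q =ᶠ[nhds x] (fun y => Wf y * (P y * Wi y)) := by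
    filter_upwards [hM.mem_nhds hx] with y hy
    obtain ⟨h1, h2, h3⟩ := halg y hy
    calc Q y = Q y * (Wf y * Wi y) := by rw [h2, mul_one]
      _ = (Q y * Wf y) * Wi y := (mul_assoc _ _ _).symm
      _ = (Wf y * P y) * Wi y := by rw [h3]
      _ = Wf y * (P y * Wi y) := mul_assoc _ _ _
  have hQx : Q x = (Wf x) * ((P x) * (Wi x)) := hQf.eq_of_nhds
  have dPWi : DifferentiableAt ℝ (fun y => P y * Wi y) x := dP.mul dWi
  have hqd : ∀ v : Fin 3 → ℝ, fderiv ℝ Q x v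
      = (Wf x) * ((fderiv ℝ P x v) + (((Wi x) * fderiv ℝ Wf x v) * (P x) - (P x) * ((Wi x) * fderiv ℝ Wf x v))) * (Wi x) := by
    intro v
    have h1 : fderiv ℝ Q x v = fderiv ℝ (fun y => Wf y * (P y * Wi y)) x v := by
      rw [hQf.fderiv_eq]
    rw [h1, fderiv_mul_dir dWf dPWi v, fderiv_mul_dir dP dWi v, hwd v]
    have hwv : fderiv ℝ Wf x v = Wf x * (Wi x * fderiv ℝ Wf x v) := by
      rw [← mul_assoc (Wf x) (Wi x) _, hu2, one_mul]
    nth_rewrite 1 [hwv]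
    noncomm_ring
  -- trace facts
  have trsub : ∀ a b : A, tr (a - b) = tr a - tr b := by
    intro a b; rw [htrL, htrL, htrL, map_sub]
  have tradd : ∀ a b : A, tr (a + b) = tr a + tr b := by
    intro a b; rw [htrL, htrL, htrL, map_add]
  -- derivative of trace composition
  have hfdtr : ∀ (H : (Fin 3 → ℝ) → A), DifferentiableAt ℝ H x → ∀ v : Fin 3 → ℝ,
      fderiv ℝ (fun y => tr (H y)) x v = tr (fderiv ℝ H x v) := by
    intro H hH v
    have h1 : (fun y => tr (H y)) = fun y => trL (H y) := funext fun y => htrL (H y)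
    have h2 : HasFDerivAt (fun y => trL (H y)) (trL.comp (fderiv ℝ H x)) x :=
      trL.hasFDerivAt.comp x hH.hasFDerivAt
    rw [h1, h2.fderiv, ContinuousLinearMap.coe_comp', Function.comp_apply, htrL]
  -- second derivative machinery
  have hW1c : ContDiffAt ℝ 1 (fderiv ℝ Wf) x := (hWc x hx).fderiv_right (by norm_num)
  have dW1 : DifferentiableAt ℝ (fderiv ℝ Wf) x := hW1c.differentiableAt one_ne_zero
  have dW1app : ∀ u : Fin 3 → ℝ, DifferentiableAt ℝ (fun y => fderiv ℝ Wf y u) x := by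
    intro u
    exact (ContinuousLinearMap.apply ℝ A u).differentiableAt.comp x dW1
  have hW1der : ∀ u v : Fin 3 → ℝ,
      fderiv ℝ (fun y => fderiv ℝ Wf y u) x v = fderiv ℝ (fderiv ℝ Wf) x v u := by
    intro u v
    have h := ((ContinuousLinearMap.apply ℝ A u).hasFDerivAt.comp x dW1.hasFDerivAt).fderiv
    have h2 : (fun y => fderiv ℝ Wf y u)
        = (⇑(ContinuousLinearMap.apply ℝ A u) ∘ fderiv ℝ Wf) := rfl
    rw [h2, h]
    rfl
  have hsymm : fderiv ℝ (fderiv ℝ Wf) x ej el = fderiv ℝ (fderiv ℝ Wf) x el ej :=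
    ((hWc x hx).isSymmSndFDerivAt (by simp [minSmoothness_of_isRCLikeNormedField])) ej el
  -- RHS derivative formula
  have hRfun : ∀ u : Fin 3 → ℝ,
      (fun y => tr (P y * Ring.inverse (Wf y) * fderiv ℝ Wf y u))
        =ᶠ[nhds x] (fun y => tr (P y * Wi y * fderiv ℝ Wf y u)) := by
    intro u
    filter_upwards [hM.mem_nhds hx] with y hy
    rw [hinv y hy]
  have hRder : ∀ u v : Fin 3 → ℝ,
      fderiv ℝ (fun y => tr (P y * Ring.inverse (Wf y) * fderiv ℝ Wf y u)) x v
      = tr ((fderiv ℝ P x v * (Wi x) + (P x) * fderiv ℝ Wi x v) * fderiv ℝ Wf x u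
          + ((P x) * (Wi x)) * (fderiv ℝ (fderiv ℝ Wf) x v u)) := by
    intro u v
    rw [(hRfun u).fderiv_eq]
    have dH : DifferentiableAt ℝ (fun y => P y * Wi y * fderiv ℝ Wf y u) x :=
      dPWi.mul (dW1app u)
    rw [hfdtr _ dH v]
    congr 1
    rw [fderiv_mul_dir dPWi (dW1app u) v, fderiv_mul_dir dP dWi v, hW1der u v]
  -- assemble
  rw [hRder el ej, hRder ej el, hQx, hqd ej, hqd el]
  -- collapse conjugation on the left
  have collapse : ∀ b b' : A,
      ((Wf x) * ((P x) * (Wi x))) * (((Wf x) * b * (Wi x)) * ((Wf x) * b' * (Wi x)) - ((Wf x) * b' * (Wi x)) * ((Wf x) * b * (Wi x)))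
        = (Wf x) * ((P x) * (b * b' - b' * b)) * (Wi x) := by
    intro b b'
    have e : ((Wf x) * ((P x) * (Wi x))) * (((Wf x) * b * (Wi x)) * ((Wf x) * b' * (Wi x)) - ((Wf x) * b' * (Wi x)) * ((Wf x) * b * (Wi x)))
        = (Wf x) * ((P x) * (((Wi x) * (Wf x)) * (b * (((Wi x) * (Wf x)) * (b' * (Wi x))))))
          - (Wf x) * ((P x) * (((Wi x) * (Wf x)) * (b' * (((Wi x) * (Wf x)) * (b * (Wi x)))))) := by noncomm_ring
    rw [e, hu1]
    noncomm_ring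
  have trconj : ∀ X : A, tr ((Wf x) * X * (Wi x)) = tr X := by
    intro X
    rw [cyc (Wf x * X) (Wi x), ← mul_assoc (Wi x) (Wf x) X, hu1, one_mul]
  rw [collapse, trconj]
  -- key algebra identity
  have main := key_alg trL.toLinearMap.toAddMonoidHom
    (fun a b => by
      show trL (a * b) = trL (b * a)
      rw [← htrL, ← htrL]; exact cyc a b)
    (P x) (fderiv ℝ P x ej) (fderiv ℝ P x el) ((Wi x) * (fderiv ℝ Wf x ej)) ((Wi x) * (fderiv ℝ Wf x el)) (hPid x hx) ?hpj ?hpl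
  case hpj => exact hrel ej
  case hpl => exact hrel el
  have hτ : ∀ T : A, trL.toLinearMap.toAddMonoidHom T = tr T := fun T => (htrL T).symm
  simp only [hτ] at main
  rw [main]
  -- finish: identify the right-hand sides
  rw [hwd ej, hwd el, hsymm]
  have idj : ((fderiv ℝ P x ej) * (Wi x) + (P x) * -((Wi x) * (fderiv ℝ Wf x ej) * (Wi x))) * (fderiv ℝ Wf x el)
      = (fderiv ℝ P x ej) * ((Wi x) * (fderiv ℝ Wf x el)) - (P x) * (((Wi x) * (fderiv ℝ Wf x ej)) * ((Wi x) * (fderiv ℝ Wf x el))) := by noncomm_ring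
  have idl : ((fderiv ℝ P x el) * (Wi x) + (P x) * -((Wi x) * (fderiv ℝ Wf x el) * (Wi x))) * (fderiv ℝ Wf x ej)
      = (fderiv ℝ P x el) * ((Wi x) * (fderiv ℝ Wf x ej)) - (P x) * (((Wi x) * (fderiv ℝ Wf x el)) * ((Wi x) * (fderiv ℝ Wf x ej))) := by noncomm_ring
  rw [idj, idl, tradd, tradd, trsub, trsub]
  rw [show (P x) * (((Wi x) * (fderiv ℝ Wf x el)) * ((Wi x) * (fderiv ℝ Wf x ej)) - ((Wi x) * (fderiv ℝ Wf x ej)) * ((Wi x) * (fderiv ℝ Wf x el)))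
      = (P x) * (((Wi x) * (fderiv ℝ Wf x el)) * ((Wi x) * (fderiv ℝ Wf x ej))) - (P x) * (((Wi x) * (fderiv ℝ Wf x ej)) * ((Wi x) * (fderiv ℝ Wf x el))) from by noncomm_ring,
    trsub]
  ring

/-- Let `P, Q : M → B(H)` be C² families of orthogonal projections on an
open set `M ⊆ ℝ³` of a finite-dimensional Hilbert space `H`, with `‖P(x) - Q(x)‖ < 1`,
and let `W(x)` be the Kato–Nagy unitary intertwining them.  Then, with
`ω^P_{jℓ} = tr(P [∂ⱼP, ∂ₗP])` and similarly for `Q`, one has pointwise on `M`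
`ω^Q_{jℓ} - ω^P_{jℓ} = ∂ⱼ tr(P W⁻¹ ∂ₗ W) - ∂ₗ tr(P W⁻¹ ∂ⱼ W)`;
in particular `ω^Q - ω^P` is exact. -/
theorem curvature_difference_is_exact
    {N : ℕ}
    (M : Set (Fin 3 → ℝ)) (hM : IsOpen M)
    (P Q : (Fin 3 → ℝ) →
      (EuclideanSpace ℂ (Fin N) →L[ℂ] EuclideanSpace ℂ (Fin N)))
    (hPsm : ContDiffOn ℝ 2 P M) (hQsm : ContDiffOn ℝ 2 Q M)
    (hPproj : ∀ x ∈ M, IsIdempotentElem (P x) ∧ IsSelfAdjoint (P x))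
    (hQproj : ∀ x ∈ M, IsIdempotentElem (Q x) ∧ IsSelfAdjoint (Q x))
    (hclose : ∀ x ∈ M, ‖P x - Q x‖ < 1)
    (W : (Fin 3 → ℝ) →
      (EuclideanSpace ℂ (Fin N) →L[ℂ] EuclideanSpace ℂ (Fin N)))
    (hW : ∀ x, W x =
      (∑' n : ℕ, (genBinom' (-(1/2)) n : ℂ) •
          (-((P x - Q x) * (P x - Q x))) ^ n) *
        (Q x * P x + (1 - Q x) * (1 - P x)))
    -- the trace of an endomorphism
    (tr : (EuclideanSpace ℂ (Fin N) →L[ℂ] EuclideanSpace ℂ (Fin N)) → ℂ)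
    (htr : ∀ T, tr T = LinearMap.trace ℂ (EuclideanSpace ℂ (Fin N)) (T : _ →ₗ[ℂ] _))
    -- partial derivatives
    (pd : Fin 3 → ((Fin 3 → ℝ) →
      (EuclideanSpace ℂ (Fin N) →L[ℂ] EuclideanSpace ℂ (Fin N))) →
      (Fin 3 → ℝ) → (EuclideanSpace ℂ (Fin N) →L[ℂ] EuclideanSpace ℂ (Fin N)))
    (hpd : ∀ j F x, pd j F x = fderiv ℝ F x (Pi.single j 1))
    (pdC : Fin 3 → ((Fin 3 → ℝ) → ℂ) → (Fin 3 → ℝ) → ℂ)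
    (hpdC : ∀ j f x, pdC j f x = fderiv ℝ f x (Pi.single j 1)) :
    ∀ x ∈ M, ∀ j ℓ : Fin 3,
      tr (Q x * (pd j Q x * pd ℓ Q x - pd ℓ Q x * pd j Q x)) -
        tr (P x * (pd j P x * pd ℓ P x - pd ℓ P x * pd j P x)) =
      pdC j (fun y => tr (P y * Ring.inverse (W y) * pd ℓ W y)) x -
        pdC ℓ (fun y => tr (P y * Ring.inverse (W y) * pd j W y)) x := by
  intro x hx j ℓ
  simp only [hpd, hpdC]
  haveI : FiniteDimensional ℝ (EuclideanSpace ℂ (Fin N) →L[ℂ] EuclideanSpace ℂ (Fin N)) :=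
    FiniteDimensional.trans ℝ ℂ _
  let trLin : (EuclideanSpace ℂ (Fin N) →L[ℂ] EuclideanSpace ℂ (Fin N)) →ₗ[ℝ] ℂ :=
    ((LinearMap.trace ℂ (EuclideanSpace ℂ (Fin N))).comp
      (ContinuousLinearMap.coeLM ℂ)).restrictScalars ℝ
  let trL : (EuclideanSpace ℂ (Fin N) →L[ℂ] EuclideanSpace ℂ (Fin N)) →L[ℝ] ℂ :=
    ⟨trLin, trLin.continuous_of_finiteDimensional⟩
  have cyc : ∀ a b : (EuclideanSpace ℂ (Fin N) →L[ℂ] EuclideanSpace ℂ (Fin N)),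
      tr (a * b) = tr (b * a) := by
    intro a b
    have hcoe : ∀ u v : (EuclideanSpace ℂ (Fin N) →L[ℂ] EuclideanSpace ℂ (Fin N)),
        ((u * v : EuclideanSpace ℂ (Fin N) →L[ℂ] EuclideanSpace ℂ (Fin N)) :
          EuclideanSpace ℂ (Fin N) →ₗ[ℂ] EuclideanSpace ℂ (Fin N))
        = (u : EuclideanSpace ℂ (Fin N) →ₗ[ℂ] EuclideanSpace ℂ (Fin N))
          * (v : EuclideanSpace ℂ (Fin N) →ₗ[ℂ] EuclideanSpace ℂ (Fin N)) := fun u v => rfl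
    rw [htr, htr, hcoe, hcoe]
    exact LinearMap.trace_mul_comm ℂ
      (a : EuclideanSpace ℂ (Fin N) →ₗ[ℂ] EuclideanSpace ℂ (Fin N))
      (b : EuclideanSpace ℂ (Fin N) →ₗ[ℂ] EuclideanSpace ℂ (Fin N))
  have hW' : ∀ y, W y = gS (-((P y - Q y) * (P y - Q y))) *
      (Q y * P y + (1 - Q y) * (1 - P y)) := fun y => (hW y).trans rfl
  exact aux_main M hM P Q W hPsm hQsm (fun y hy => (hPproj y hy).1)
    (fun y hy => (hQproj y hy).1) hclose hW' tr trL (fun T => htr T) cyc x hx j ℓ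
end

section
/- Let Ψ : S¹ → ℂ² be continuous with ‖Ψ(k)‖ = 1 and components ψ₁(k), ψ₂(k) both nonvanishing for all k ∈ S¹, and suppose |ψ₁(k)| = |ψ₂(k)| for all k and ψ₁(k) is real and positive. Then the holonomy of the Berry connection, Hol = exp(−∮_{S¹} ⟨Ψ(k), ∂_θ Ψ(k)⟩ dθ), equals e^{−iπ n_w}, where n_w = deg(g) is the winding number of g(k) = ψ₂(k)/ψ₁(k) · |ψ₁(k)|/|ψ₂(k)| : S¹ → U(1). -/
open Complex Real intervalIntegral

/-- let `Ψ : S¹ → ℂ²` be (C¹-)continuous, unit-norm, with both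
components nonvanishing, equal moduli, and `ψ₁` real and positive.  Then the Berry
holonomy `exp(-∮ ⟨Ψ, ∂_θ Ψ⟩ dθ)` equals `e^{-iπ n_w}`, where `n_w = deg(g)` is the
winding number of `g = phase(ψ₂/ψ₁) : S¹ → U(1)`. -/
theorem berry_holonomy_eq_winding
    (Ψ : ℝ → Fin 2 → ℂ) (hΨ : ContDiff ℝ 1 Ψ)
    (hper : ∀ θ : ℝ, Ψ (θ + 2 * π) = Ψ θ)
    (hne : ∀ θ : ℝ, Ψ θ 0 ≠ 0 ∧ Ψ θ 1 ≠ 0)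
    (hnorm : ∀ θ : ℝ, ‖Ψ θ 0‖ ^ 2 + ‖Ψ θ 1‖ ^ 2 = 1)
    (hmod : ∀ θ : ℝ, ‖Ψ θ 0‖ = ‖Ψ θ 1‖)
    (hreal : ∀ θ : ℝ, (Ψ θ 0).im = 0 ∧ 0 < (Ψ θ 0).re)
    (g : ℝ → ℂ) (hg : g = fun θ => Ψ θ 1 / Ψ θ 0)
    (nw : ℤ)
    (hnw : (nw : ℂ) = (1 / (2 * π * I)) *
      ∫ θ in (0:ℝ)..(2 * π), starRingEnd ℂ (g θ) * deriv g θ) :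
    Complex.exp (-∫ θ in (0:ℝ)..(2 * π),
        ∑ j : Fin 2, starRingEnd ℂ (Ψ θ j) * deriv (fun t => Ψ t j) θ) =
      Complex.exp (-(I * π * nw)) := by
  set c : ℝ := Real.sqrt (1/2) with hc
  have hc2 : c ^ 2 = 1 / 2 := Real.sq_sqrt (by norm_num)
  have hcpos : 0 < c := Real.sqrt_pos.mpr (by norm_num)
  have hcne : (c : ℂ) ≠ 0 := by
    exact_mod_cast Complex.ofReal_ne_zero.mpr hcpos.ne'
  -- ψ₁ is the constant c
  have hc0 : ∀ θ : ℝ, Ψ θ 0 = (c : ℂ) := by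
    intro θ
    have him := (hreal θ).1
    have hre := (hreal θ).2
    have habs : ‖Ψ θ 0‖ = (Ψ θ 0).re := by
      rw [Complex.norm_def, Complex.normSq_apply, him]
      simp [← pow_two, Real.sqrt_sq hre.le]
    have hsq : (Ψ θ 0).re ^ 2 = 1 / 2 := by
      have h1 := hnorm θ
      rw [← hmod θ, habs] at h1
      linarith
    have : (Ψ θ 0).re = c := by
      rw [hc, ← hsq, Real.sqrt_sq hre.le]
    exact Complex.ext (by simpa using this) (by simpa using him)
  -- component 1 in terms of g
  have hΨ1 : ∀ θ : ℝ, Ψ θ 1 = (c : ℂ) * g θ := by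
    intro θ
    rw [hg]
    field_simp [hc0 θ]
    rw [hc0 θ, mul_div_cancel_right₀ _ hcne]
  -- derivative of component 0 is zero
  have hd0 : ∀ θ : ℝ, deriv (fun t => Ψ t 0) θ = 0 := by
    intro θ
    have : (fun t => Ψ t 0) = fun _ => (c : ℂ) := funext fun t => hc0 t
    rw [this, deriv_const]
  -- differentiability of component 1
  have hdiff1 : Differentiable ℝ fun t => Ψ t 1 := by
    have h := hΨ.differentiable one_ne_zero
    exact ((ContinuousLinearMap.proj (1 : Fin 2) :
        (Fin 2 → ℂ) →L[ℝ] ℂ).differentiable.comp h : )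
  -- derivative of g
  have hdg : ∀ θ : ℝ, deriv g θ = deriv (fun t => Ψ t 1) θ / (c : ℂ) := by
    intro θ
    have hgf : g = fun t => (fun s => Ψ s 1) t * ((c : ℂ))⁻¹ := by
      funext t
      rw [hg]
      field_simp [hc0 t]
      rw [hc0 t, mul_div_cancel_right₀ _ hcne]
    rw [hgf, deriv_mul_const (hdiff1 θ), div_eq_mul_inv]
  -- pointwise identity for the integrand
  have hpt : ∀ θ : ℝ,
      (∑ j : Fin 2, starRingEnd ℂ (Ψ θ j) * deriv (fun t => Ψ t j) θ)
        = (1/2 : ℂ) * (starRingEnd ℂ (g θ) * deriv g θ) := by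
    intro θ
    rw [Fin.sum_univ_two, hd0 θ, hdg θ, hΨ1 θ]
    have hc2' : (c : ℂ) ^ 2 = 1 / 2 := by
      rw [← Complex.ofReal_pow, hc2]; norm_num
    rw [map_mul, Complex.conj_ofReal, ← hc2']
    field_simp
    ring
  -- now compute the integral
  rw [intervalIntegral.integral_congr (fun θ _ => hpt θ),
    intervalIntegral.integral_const_mul]
  have hI : (∫ θ in (0:ℝ)..(2 * π), starRingEnd ℂ (g θ) * deriv g θ)
      = 2 * π * I * nw := by
    rw [hnw]
    have h2 : (2 * (π:ℂ) * I) ≠ 0 := by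
      simp [Real.pi_ne_zero, Complex.I_ne_zero]
    field_simp
  rw [hI]
  ring_nf
end
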